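/- Fix a prime power q and let P ∈ 𝔽_q[X] be a nonconstant polynomial with P(0) = 0. Then there exist constants γ ∈ (0, 1) and C > 0, depending only on q and the degree of P, such that the following holds for every natural number n ≥ 1. If A ⊆ {f ∈ 𝔽_q[t] : deg f < n} is such that there is no pair (f, g) with f ∈ A, g ∈ 𝔽_q[t], P(g) ≠ 0, and f + P(g) ∈ A, then |A| ≤ C · (qⁿ)^(1−γ). -/

import Mathlib

set_option linter.unusedSectionVars false
set_option maxHeartbeats 1000000
open Polynomial Finset
namespace LiSauer
attribute [local instance] Classical.propDecidable
variable {F : Type} [Field F] [Fintype F]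





/-- reduction of exponent -/
def redE (q e : ℕ) : ℕ := if e = 0 then 0 else (e-1) % (q-1) + 1

lemma redE_le (q e : ℕ) : redE q e ≤ e := by
  unfold redE; split
  · omega
  · have := Nat.mod_le (e-1) (q-1); omega

lemma redE_le_q (q e : ℕ) (hq : 2 ≤ q) : redE q e ≤ q - 1 := by
  unfold redE; split
  · omega
  · have : (e-1) % (q-1) < q-1 := Nat.mod_lt _ (by omega)
    omega

lemma pow_redE (x : F) (e : ℕ) : x ^ redE (Fintype.card F) e = x ^ e := by
  set q := Fintype.card F with hq
  have hq2 : 2 ≤ q := Fintype.one_lt_card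
  unfold redE
  split
  · subst ‹e = 0›; rfl
  · rename_i he
    by_cases hx : x = 0
    · subst hx
      rw [zero_pow (by omega), zero_pow (by omega)]
    · have hdm := Nat.div_add_mod (e-1) (q-1)
      have h1 : x ^ e = x ^ ((e-1) % (q-1) + 1) * (x^(q-1)) ^ ((e-1)/(q-1)) := by
        rw [← pow_mul, ← pow_add]; congr 1; omega
      rw [h1, FiniteField.pow_card_sub_one_eq_one x hx, one_pow, mul_one]

lemma one_sub_pow (x : F) :
    (1:F) - x ^ (Fintype.card F - 1) = if x = 0 then 1 else 0 := by
  split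
  · subst ‹x = 0›
    rw [zero_pow (by have : 2 ≤ Fintype.card F := Fintype.one_lt_card; omega), sub_zero]
  · rw [FiniteField.pow_card_sub_one_eq_one x ‹x ≠ 0›, sub_self]

/-- product of coefficient-deltas detects equality of low-degree polynomials -/
lemma prod_delta (n : ℕ) (u w : F[X]) (hu : u.degree < (n : WithBot ℕ)) (hw : w.degree < (n : WithBot ℕ)) :
    (∏ i : Fin n, ((1:F) - ((u - w).coeff i) ^ (Fintype.card F - 1))) = if u = w then 1 else 0 := by
  split
  · subst ‹u = w›
    simp [one_sub_pow]
  · rename_i hne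
    have hsub : u - w ≠ 0 := sub_ne_zero_of_ne hne
    have hdeg : (u - w).degree < (n : WithBot ℕ) := lt_of_le_of_lt (degree_sub_le u w) (max_lt hu hw)
    have hnd : (u - w).natDegree < n := by
      exact (Polynomial.natDegree_lt_iff_degree_lt hsub).mpr hdeg
    refine Finset.prod_eq_zero (Finset.mem_univ (⟨(u - w).natDegree, hnd⟩ : Fin n)) ?_
    rw [one_sub_pow]
    rw [if_neg]
    exact mt Polynomial.leadingCoeff_eq_zero.mp hsub


/-- vanishing lemma: a low-degree polynomial sums to zero over all of `F^m` -/
lemma sum_eval_eq_zero (m : ℕ) (c : MvPolynomial (Fin m) F)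
    (hc : c.totalDegree < m * (Fintype.card F - 1)) :
    ∑ v : Fin m → F, MvPolynomial.eval v c = 0 := by
  have key : ∀ b ∈ c.support, ∑ v : Fin m → F, (c.coeff b * ∏ i, (v i) ^ (b i)) = 0 := by
    intro b hb
    have hsum : ∑ i, b i ≤ c.totalDegree := by
      have h1 := MvPolynomial.le_totalDegree hb
      have : (b.sum fun _ e => e) = ∑ i, b i := by
        rw [Finsupp.sum_fintype]; intro _; rfl
      omega
    have hex : ∃ i, b i < Fintype.card F - 1 := by
      by_contra hno
      push_neg at hno
      have : m * (Fintype.card F - 1) ≤ ∑ i, b i := by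
        calc m * (Fintype.card F - 1) = ∑ _i : Fin m, (Fintype.card F - 1) := by
              rw [Finset.sum_const, card_univ, Fintype.card_fin, smul_eq_mul]
          _ ≤ ∑ i, b i := Finset.sum_le_sum fun i _ => hno i
      omega
    obtain ⟨i0, hi0⟩ := hex
    rw [← Finset.mul_sum]
    have : ∑ v : Fin m → F, ∏ i, (v i) ^ (b i) = 0 := by
      have hswap : ∑ v : Fin m → F, ∏ i, (v i) ^ (b i)
          = ∏ i : Fin m, ∑ x : F, x ^ (b i) := by
        rw [Finset.prod_univ_sum]
        rw [Fintype.piFinset_univ]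
      rw [hswap]
      exact Finset.prod_eq_zero (Finset.mem_univ i0)
        (FiniteField.sum_pow_lt_card_sub_one (K := F) (b i0) hi0)
    rw [this, mul_zero]
  calc ∑ v : Fin m → F, MvPolynomial.eval v c
      = ∑ v : Fin m → F, ∑ b ∈ c.support, (c.coeff b * ∏ i, (v i) ^ (b i)) := by
        refine Finset.sum_congr rfl fun v _ => ?_
        rw [MvPolynomial.eval_eq']
    _ = ∑ b ∈ c.support, ∑ v : Fin m → F, (c.coeff b * ∏ i, (v i) ^ (b i)) := Finset.sum_comm
    _ = 0 := Finset.sum_eq_zero key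

variable {n m d : ℕ}

/-- weighted degree control: every coefficient of `U` (a polynomial in the `h`-variables with
coefficients that are polynomials in the `g`-variables) satisfies
`totalDegree + d * (monomial degree) ≤ w` -/
def DegWt (d : ℕ) (U : MvPolynomial (Fin n) (MvPolynomial (Fin m) F)) (w : ℕ) : Prop :=
  ∀ b : Fin n →₀ ℕ, U.coeff b ≠ 0 → (U.coeff b).totalDegree + d * (∑ i, b i) ≤ w

lemma DegWt.mono {U : MvPolynomial (Fin n) (MvPolynomial (Fin m) F)} {w w' : ℕ}
    (h : DegWt d U w) (hw : w ≤ w') : DegWt d U w' :=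
  fun b hb => le_trans (h b hb) hw

lemma degWt_one : DegWt d (1 : MvPolynomial (Fin n) (MvPolynomial (Fin m) F)) 0 := by
  intro b hb
  rw [MvPolynomial.coeff_one] at hb ⊢
  by_cases h : (0 : Fin n →₀ ℕ) = b
  · subst h
    simp [MvPolynomial.totalDegree_one]
  · simp [h] at hb

lemma degWt_C {u : MvPolynomial (Fin m) F} (hu : u.totalDegree ≤ w) :
    DegWt d (MvPolynomial.C u : MvPolynomial (Fin n) (MvPolynomial (Fin m) F)) w := by
  intro b hb
  rw [MvPolynomial.coeff_C] at hb ⊢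
  by_cases h : (0 : Fin n →₀ ℕ) = b
  · subst h
    simpa using hu
  · simp [h] at hb

lemma degWt_X (i : Fin n) :
    DegWt d (MvPolynomial.X i : MvPolynomial (Fin n) (MvPolynomial (Fin m) F)) d := by
  intro b hb
  rw [MvPolynomial.coeff_X'] at hb ⊢
  by_cases h : Finsupp.single i 1 = b
  · subst h
    simp only [if_pos rfl]
    have h1 : ∑ j, (Finsupp.single i 1) j = 1 := by
      simp [Finsupp.single_apply]
    rw [h1]
    simp
  · simp [h] at hb

lemma degWt_add {U V : MvPolynomial (Fin n) (MvPolynomial (Fin m) F)} {w : ℕ}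
    (hU : DegWt d U w) (hV : DegWt d V w) : DegWt d (U + V) w := by
  intro b hb
  rw [MvPolynomial.coeff_add] at hb ⊢
  by_cases h1 : U.coeff b = 0
  · rw [h1, zero_add] at hb ⊢
    exact hV b hb
  by_cases h2 : V.coeff b = 0
  · rw [h2, add_zero] at hb ⊢
    exact hU b hb
  have := hU b h1
  have := hV b h2
  have hle := MvPolynomial.totalDegree_add (U.coeff b) (V.coeff b)
  omega

lemma degWt_neg {U : MvPolynomial (Fin n) (MvPolynomial (Fin m) F)} {w : ℕ}
    (hU : DegWt d U w) : DegWt d (-U) w := by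
  intro b hb
  rw [MvPolynomial.coeff_neg] at hb ⊢
  rw [MvPolynomial.totalDegree_neg]
  exact hU b (by simpa using hb)

lemma degWt_sub {U V : MvPolynomial (Fin n) (MvPolynomial (Fin m) F)} {w : ℕ}
    (hU : DegWt d U w) (hV : DegWt d V w) : DegWt d (U - V) w := by
  rw [sub_eq_add_neg]; exact degWt_add hU (degWt_neg hV)

lemma degWt_mul {U V : MvPolynomial (Fin n) (MvPolynomial (Fin m) F)} {w1 w2 : ℕ}
    (hU : DegWt d U w1) (hV : DegWt d V w2) : DegWt d (U * V) (w1 + w2) := by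
  intro b hb
  rw [MvPolynomial.coeff_mul] at hb ⊢
  obtain ⟨x, hx, hxne⟩ := Finset.exists_ne_zero_of_sum_ne_zero hb
  have hx1 := hU _ (left_ne_zero_of_mul hxne)
  have hx2 := hV _ (right_ne_zero_of_mul hxne)
  have hxab : x.1 + x.2 = b := Finset.HasAntidiagonal.mem_antidiagonal.mp hx
  have hxsum : (∑ i, x.1 i) + (∑ i, x.2 i) = ∑ i, b i := by
    rw [← Finset.sum_add_distrib]
    refine Finset.sum_congr rfl fun i _ => ?_
    rw [← hxab]; rfl
  have hle : (∑ y ∈ Finset.HasAntidiagonal.antidiagonal b, U.coeff y.1 * V.coeff y.2).totalDegree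
      ≤ (w1 + w2) - d * (∑ i, b i) := by
    refine le_trans (MvPolynomial.totalDegree_finset_sum _ _) ?_
    refine Finset.sup_le fun y hy => ?_
    by_cases h0 : U.coeff y.1 * V.coeff y.2 = 0
    · simp [h0]
    · have hy1 := hU _ (left_ne_zero_of_mul h0)
      have hy2 := hV _ (right_ne_zero_of_mul h0)
      have hyab : y.1 + y.2 = b := Finset.HasAntidiagonal.mem_antidiagonal.mp hy
      have hysum : (∑ i, y.1 i) + (∑ i, y.2 i) = ∑ i, b i := by
        rw [← Finset.sum_add_distrib]
        refine Finset.sum_congr rfl fun i _ => ?_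
        rw [← hyab]; rfl
      have hmul := MvPolynomial.totalDegree_mul (U.coeff y.1) (V.coeff y.2)
      have hdd : d * (∑ i, b i) = d * (∑ i, y.1 i) + d * (∑ i, y.2 i) := by
        rw [← hysum, mul_add]
      omega
  have hdd' : d * (∑ i, b i) = d * (∑ i, x.1 i) + d * (∑ i, x.2 i) := by
    rw [← hxsum, mul_add]
  omega

lemma degWt_pow {U : MvPolynomial (Fin n) (MvPolynomial (Fin m) F)} {w : ℕ}
    (hU : DegWt d U w) (k : ℕ) : DegWt d (U ^ k) (k * w) := by
  induction k with
  | zero => simpa using degWt_one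
  | succ k ih =>
      rw [pow_succ, Nat.succ_mul]
      exact degWt_mul ih hU

lemma degWt_prod {ι : Type*} (s : Finset ι) (f : ι → MvPolynomial (Fin n) (MvPolynomial (Fin m) F))
    (w : ι → ℕ) (h : ∀ i ∈ s, DegWt d (f i) (w i)) :
    DegWt d (∏ i ∈ s, f i) (∑ i ∈ s, w i) := by
  induction s using Finset.cons_induction with
  | empty => simpa using degWt_one
  | cons a s ha ih =>
      rw [Finset.prod_cons, Finset.sum_cons]
      exact degWt_mul (h a (Finset.mem_cons_self a s)) (ih fun i hi => h i (Finset.mem_cons_of_mem hi))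


variable (F) in
/-- the generic substituted polynomial `g = ∑ v_j t^(j+1)` -/
noncomputable def Gv (m' : ℕ) (v : Fin m' → F) : F[X] :=
  ∑ j : Fin m', Polynomial.C (v j) * Polynomial.X ^ ((j:ℕ)+1)

variable (F) in
noncomputable def GG (m' : ℕ) : Polynomial (MvPolynomial (Fin m') F) :=
  ∑ j : Fin m', Polynomial.C (MvPolynomial.X j) * Polynomial.X ^ ((j:ℕ)+1)

variable (F) in
noncomputable def Qc (P : F[X]) (m' i : ℕ) : MvPolynomial (Fin m') F :=
  ((P.map MvPolynomial.C).comp (GG F m')).coeff i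

lemma Gv_natDegree {m' : ℕ} (v : Fin m' → F) : (Gv F m' v).natDegree ≤ m' := by
  refine natDegree_sum_le_of_forall_le _ _ fun j _ => ?_
  refine le_trans (natDegree_C_mul_le _ _) ?_
  rw [natDegree_X_pow]
  omega

lemma Gv_coeff_zero {m' : ℕ} (v : Fin m' → F) : (Gv F m' v).coeff 0 = 0 := by
  rw [Gv, finset_sum_coeff]
  refine Finset.sum_eq_zero fun j _ => ?_
  rw [coeff_C_mul, coeff_X_pow, if_neg (by omega), mul_zero]

lemma Gv_coeff_succ {m' : ℕ} (v : Fin m' → F) (j : Fin m') :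
    (Gv F m' v).coeff ((j:ℕ)+1) = v j := by
  rw [Gv, finset_sum_coeff]
  rw [Finset.sum_eq_single j]
  · rw [coeff_C_mul, coeff_X_pow, if_pos rfl, mul_one]
  · intro k _ hk
    rw [coeff_C_mul, coeff_X_pow, if_neg (by simpa [Fin.val_injective.eq_iff] using (Ne.symm hk)), mul_zero]
  · intro h; exact absurd (Finset.mem_univ j) h

lemma Gv_zero (m' : ℕ) : Gv F m' (0 : Fin m' → F) = 0 := by
  rw [Gv]
  refine Finset.sum_eq_zero fun j _ => ?_
  simp

lemma eval_Qc {m' : ℕ} (P : F[X]) (v : Fin m' → F) (i : ℕ) :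
    MvPolynomial.eval v (Qc F P m' i) = (P.comp (Gv F m' v)).coeff i := by
  rw [Qc, ← Polynomial.coeff_map]
  congr 1
  rw [Polynomial.map_comp]
  congr 1
  · rw [Polynomial.map_map]
    have : (MvPolynomial.eval v : MvPolynomial (Fin m') F →+* F).comp
        (MvPolynomial.C : F →+* MvPolynomial (Fin m') F) = RingHom.id F := by
      ext x
      simp
    rw [this, Polynomial.map_id]
  · rw [GG, Polynomial.map_sum, Gv]
    refine Finset.sum_congr rfl fun j _ => ?_
    rw [Polynomial.map_mul, Polynomial.map_C, Polynomial.map_pow, Polynomial.map_X]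
    simp

lemma td_Qc {m' : ℕ} (P : F[X]) (i : ℕ) : (Qc F P m' i).totalDegree ≤ P.natDegree := by
  have hGG : ∀ k i : ℕ, (((GG F m') ^ k).coeff i).totalDegree ≤ k := by
    have base : ∀ i : ℕ, ((GG F m').coeff i).totalDegree ≤ 1 := by
      intro i
      rw [GG, finset_sum_coeff]
      refine le_trans (MvPolynomial.totalDegree_finset_sum _ _) ?_
      refine Finset.sup_le fun j _ => ?_
      rw [coeff_C_mul, coeff_X_pow]
      split
      · rw [mul_one]; exact le_of_eq (MvPolynomial.totalDegree_X _)
      · rw [mul_zero]; simp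
    intro k
    induction k with
    | zero =>
        intro i
        rcases Nat.eq_zero_or_pos i with h | h
        · subst h; simp
        · rw [pow_zero, Polynomial.coeff_one, if_neg (by omega)]
          simp
    | succ k ih =>
        intro i
        rw [pow_succ, Polynomial.coeff_mul]
        refine le_trans (MvPolynomial.totalDegree_finset_sum _ _) ?_
        refine Finset.sup_le fun x hx => ?_
        refine le_trans (MvPolynomial.totalDegree_mul _ _) ?_
        have h1 := ih x.1
        have h2 := base x.2
        omega
  rw [Qc, comp_eq_sum_left, Polynomial.sum_def, finset_sum_coeff]
  refine le_trans (MvPolynomial.totalDegree_finset_sum _ _) ?_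
  refine Finset.sup_le fun e he => ?_
  rw [coeff_C_mul]
  refine le_trans (MvPolynomial.totalDegree_mul _ _) ?_
  have h1 : ((P.map (MvPolynomial.C : F →+* MvPolynomial (Fin m') F)).coeff e).totalDegree = 0 := by
    rw [Polynomial.coeff_map]
    exact MvPolynomial.totalDegree_C _
  have h2 := hGG e i
  have he' : e ≤ P.natDegree := by
    have h3 : (P.map (MvPolynomial.C : F →+* MvPolynomial (Fin m') F)).coeff e ≠ 0 :=
      Polynomial.mem_support_iff.mp he
    rw [Polynomial.coeff_map] at h3
    have h4 : P.coeff e ≠ 0 := fun h => h3 (by rw [h, map_zero])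
    exact Polynomial.le_natDegree_of_ne_zero h4
  omega


variable (F) in
noncomputable def TT (P : F[X]) (n m' : ℕ) : MvPolynomial (Fin n) (MvPolynomial (Fin m') F) :=
  ∏ i : Fin n, (1 - (MvPolynomial.C (Qc F P m' (i:ℕ)) - MvPolynomial.X i) ^ (Fintype.card F - 1))

lemma degWt_TT (P : F[X]) (n m' : ℕ) :
    DegWt P.natDegree (TT F P n m') (n * (P.natDegree * (Fintype.card F - 1))) := by
  rw [TT]
  have hf : ∀ i ∈ (univ : Finset (Fin n)), DegWt P.natDegree
      ((1 : MvPolynomial (Fin n) (MvPolynomial (Fin m') F))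
        - (MvPolynomial.C (Qc F P m' (i:ℕ)) - MvPolynomial.X i) ^ (Fintype.card F - 1))
      (P.natDegree * (Fintype.card F - 1)) := by
    intro i _
    refine degWt_sub (degWt_one.mono (Nat.zero_le _)) ?_
    have hB : DegWt P.natDegree
        (MvPolynomial.C (Qc F P m' (i:ℕ)) - MvPolynomial.X i) P.natDegree :=
      degWt_sub (degWt_C (td_Qc P (i:ℕ))) (degWt_X i)
    exact (degWt_pow hB (Fintype.card F - 1)).mono (le_of_eq (Nat.mul_comm _ _))
  have := degWt_prod (univ : Finset (Fin n)) _ _ hf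
  simpa using this

lemma eval_TT (P : F[X]) (n m' : ℕ) (v : Fin m' → F) (h : Fin n → F) :
    MvPolynomial.eval v (MvPolynomial.eval (fun i => MvPolynomial.C (h i)) (TT F P n m'))
      = ∏ i : Fin n, ((1:F) - ((P.comp (Gv F m' v)).coeff (i:ℕ) - h i) ^ (Fintype.card F - 1)) := by
  rw [TT, map_prod, map_prod]
  refine Finset.prod_congr rfl fun i _ => ?_
  rw [map_sub, map_sub, map_one, map_one, map_pow, map_pow, map_sub, map_sub]
  simp [MvPolynomial.eval_C, MvPolynomial.eval_X, eval_Qc]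

lemma eval_TT_expand (P : F[X]) (n m' : ℕ) (h : Fin n → F) :
    MvPolynomial.eval (fun i => MvPolynomial.C (h i)) (TT F P n m')
      = ∑ b ∈ (TT F P n m').support,
          (TT F P n m').coeff b * MvPolynomial.C (∏ i, (h i) ^ (b i)) := by
  rw [MvPolynomial.eval_eq']
  refine Finset.sum_congr rfl fun b _ => ?_
  congr 1
  rw [map_prod]
  refine Finset.prod_congr rfl fun i _ => ?_
  rw [map_pow]

variable (F) in
noncomputable def Mfun (P : F[X]) (n m' : ℕ) (w : F[X]) : F :=
  ∑ v : Fin m' → F, ∏ i : Fin n,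
    ((1:F) - ((P.comp (Gv F m' v) - w).coeff (i:ℕ)) ^ (Fintype.card F - 1))

lemma Mfun_eq (P : F[X]) (n m' : ℕ) (w : F[X]) :
    Mfun F P n m' w = ∑ b ∈ (TT F P n m').support,
      (∑ v : Fin m' → F, MvPolynomial.eval v ((TT F P n m').coeff b))
        * ∏ i : Fin n, (w.coeff (i:ℕ)) ^ (b i) := by
  have step1 : ∀ v : Fin m' → F,
      (∏ i : Fin n, ((1:F) - ((P.comp (Gv F m' v) - w).coeff (i:ℕ)) ^ (Fintype.card F - 1)))
      = ∑ b ∈ (TT F P n m').support,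
          MvPolynomial.eval v ((TT F P n m').coeff b) * ∏ i : Fin n, (w.coeff (i:ℕ)) ^ (b i) := by
    intro v
    calc (∏ i : Fin n, ((1:F) - ((P.comp (Gv F m' v) - w).coeff (i:ℕ)) ^ (Fintype.card F - 1)))
        = ∏ i : Fin n, ((1:F) - ((P.comp (Gv F m' v)).coeff (i:ℕ) - w.coeff (i:ℕ)) ^ (Fintype.card F - 1)) := by
          refine Finset.prod_congr rfl fun i _ => ?_
          rw [Polynomial.coeff_sub]
      _ = MvPolynomial.eval v (MvPolynomial.eval (fun i : Fin n => MvPolynomial.C (w.coeff (i:ℕ))) (TT F P n m')) :=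
          (eval_TT P n m' v (fun i : Fin n => w.coeff (i:ℕ))).symm
      _ = MvPolynomial.eval v (∑ b ∈ (TT F P n m').support,
            (TT F P n m').coeff b * MvPolynomial.C (∏ i : Fin n, (w.coeff (i:ℕ)) ^ (b i))) := by
          rw [eval_TT_expand P n m' (fun i : Fin n => w.coeff (i:ℕ))]
      _ = ∑ b ∈ (TT F P n m').support,
            MvPolynomial.eval v ((TT F P n m').coeff b) * ∏ i : Fin n, (w.coeff (i:ℕ)) ^ (b i) := by
          rw [map_sum]
          refine Finset.sum_congr rfl fun b _ => ?_
          rw [map_mul, MvPolynomial.eval_C]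
  rw [Mfun]
  rw [Finset.sum_congr rfl fun v _ => step1 v]
  rw [Finset.sum_comm]
  refine Finset.sum_congr rfl fun b _ => ?_
  rw [Finset.sum_mul]

lemma Mfun_count (P : F[X]) (n m' : ℕ) (hm : P.natDegree * m' < n) (w : F[X])
    (hw : w.degree < (n : WithBot ℕ)) :
    Mfun F P n m' w = ∑ v : Fin m' → F, (if P.comp (Gv F m' v) = w then (1:F) else 0) := by
  refine Finset.sum_congr rfl fun v _ => ?_
  have h1 : (P.comp (Gv F m' v)).natDegree ≤ P.natDegree * m' :=
    le_trans (Polynomial.natDegree_comp_le) (Nat.mul_le_mul_left _ (Gv_natDegree v))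
  have h2 : (P.comp (Gv F m' v)).natDegree < n := lt_of_le_of_lt h1 hm
  have hdeg : (P.comp (Gv F m' v)).degree < (n : WithBot ℕ) :=
    lt_of_le_of_lt (Polynomial.degree_le_natDegree) (by exact_mod_cast h2)
  exact prod_delta n _ w hdeg hw

lemma comp_Gv_eq_zero_iff (P : F[X]) (hP : 1 ≤ P.natDegree) (h0 : P.coeff 0 = 0)
    {m' : ℕ} (v : Fin m' → F) :
    P.comp (Gv F m' v) = 0 ↔ v = 0 := by
  constructor
  · intro h
    by_contra hv
    have hGne : Gv F m' v ≠ 0 := by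
      obtain ⟨j, hj⟩ : ∃ j, v j ≠ 0 := by
        by_contra hall
        push_neg at hall
        exact hv (funext hall)
      intro hG
      apply hj
      rw [← Gv_coeff_succ v j, hG, Polynomial.coeff_zero]
    have hGnd : 1 ≤ (Gv F m' v).natDegree := by
      by_contra hnd
      push_neg at hnd
      have heq : Gv F m' v = Polynomial.C ((Gv F m' v).coeff 0) :=
        Polynomial.eq_C_of_natDegree_eq_zero (by omega)
      rw [Gv_coeff_zero, map_zero] at heq
      exact hGne heq
    have hcomp := Polynomial.natDegree_comp (p := P) (q := Gv F m' v)
    rw [h, Polynomial.natDegree_zero] at hcomp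
    have hpos := Nat.mul_pos (show 0 < P.natDegree by omega)
      (show 0 < (Gv F m' v).natDegree by omega)
    omega
  · intro h
    subst h
    rw [Gv_zero, Polynomial.comp_zero, ← Polynomial.coeff_zero_eq_eval_zero, h0, map_zero]

variable (F) in
/-- the coefficient functional `Λ(coeff_b TT)` -/
noncomputable def cf (P : F[X]) (n m' : ℕ) (b : Fin n →₀ ℕ) : F :=
  ∑ v : Fin m' → F, MvPolynomial.eval v ((TT F P n m').coeff b)

/-- degree threshold -/
def DDelta (q d n : ℕ) : ℕ := ((q - 1) * (d * n - (n - 1) / d)) / d / 2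

/-- the set of small monomials -/
noncomputable def SSet (q d n : ℕ) : Finset (Fin n → ℕ) :=
  (Fintype.piFinset fun _ : Fin n => Finset.range q).filter (fun b => ∑ i, b i ≤ DDelta q d n)

lemma key_deg (P : F[X]) (hd : 1 ≤ P.natDegree) (n m' : ℕ) (b : Fin n →₀ ℕ)
    (hb : b ∈ (TT F P n m').support) (hc : cf F P n m' b ≠ 0) :
    ∑ i, b i ≤ ((Fintype.card F - 1) * (P.natDegree * n - m')) / P.natDegree := by
  have hq2 : 2 ≤ Fintype.card F := Fintype.one_lt_card
  set Q := Fintype.card F - 1 with hQdef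
  have hq1 : 1 ≤ Q := by omega
  set d := P.natDegree with hddef
  set t := ((TT F P n m').coeff b).totalDegree with htdef
  set S := ∑ i, b i with hSdef
  have htd : m' * Q ≤ t := by
    by_contra hlt
    push_neg at hlt
    exact hc (sum_eval_eq_zero m' _ (by rw [← hQdef]; omega))
  have hW : t + d * S ≤ n * (d * Q) := degWt_TT P n m' b (MvPolynomial.mem_support_iff.mp hb)
  have hm'dn : m' ≤ d * n := by
    have h1 : m' * Q ≤ (d * n) * Q := by
      refine le_trans htd (le_trans ?_ (le_of_eq (by ring : n * (d * Q) = (d*n) * Q)))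
      omega
    exact Nat.le_of_mul_le_mul_right h1 (by omega)
  have hms : Q * (d*n - m') = Q*(d*n) - Q*m' := by
    obtain ⟨k, hk⟩ := Nat.le.dest hm'dn
    rw [← hk, Nat.add_sub_cancel_left, Nat.mul_add, Nat.add_sub_cancel_left]
  rw [Nat.le_div_iff_mul_le (show 0 < d by omega)]
  calc S * d = d * S := Nat.mul_comm _ _
    _ ≤ n * (d * Q) - t := Nat.le_sub_of_add_le (by omega)
    _ ≤ n * (d * Q) - m' * Q := Nat.sub_le_sub_left htd _
    _ = Q * (d*n) - Q * m' := by rw [show n * (d*Q) = Q * (d*n) from by ring, show m' * Q = Q * m' from by ring]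
    _ = Q * (d*n - m') := hms.symm

variable (F) in
noncomputable def idxSet (P : F[X]) (n m' : ℕ) : Finset ((_ : Fin n →₀ ℕ) × (Fin n → ℕ)) :=
  ((TT F P n m').support.filter (fun b => cf F P n m' b ≠ 0)).sigma
    (fun b => Fintype.piFinset (fun i => Finset.range (redE (Fintype.card F) (b i) + 1)))

variable (F) in
noncomputable def termF (P : F[X]) (n m' : ℕ) (p : (_ : Fin n →₀ ℕ) × (Fin n → ℕ))
    (f f' : F[X]) : F :=
  cf F P n m' p.1 * ∏ i : Fin n,
    ((-1:F) ^ (p.2 i + redE (Fintype.card F) (p.1 i)) * (f'.coeff (i:ℕ)) ^ (p.2 i)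
      * (f.coeff (i:ℕ)) ^ (redE (Fintype.card F) (p.1 i) - p.2 i)
      * ((redE (Fintype.card F) (p.1 i)).choose (p.2 i) : F))

lemma Mfun_term_expand (P : F[X]) (n m' : ℕ) (f f' : F[X]) :
    Mfun F P n m' (f' - f) = ∑ p ∈ idxSet F P n m', termF F P n m' p f f' := by
  set q := Fintype.card F with hqdef
  rw [Mfun_eq]
  rw [← Finset.sum_filter_of_ne (p := fun b => cf F P n m' b ≠ 0)
    (fun b _ hne => fun hc => hne (by rw [show (∑ v : Fin m' → F,
      MvPolynomial.eval v ((TT F P n m').coeff b)) = cf F P n m' b from rfl, hc, zero_mul]))]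
  rw [idxSet, Finset.sum_sigma]
  refine Finset.sum_congr rfl fun b hb => ?_
  have hstep : ∀ i : Fin n, ((f' - f).coeff (i:ℕ)) ^ (b i)
      = ∑ a ∈ Finset.range (redE q (b i) + 1),
          ((-1:F) ^ (a + redE q (b i)) * (f'.coeff (i:ℕ)) ^ a
            * (f.coeff (i:ℕ)) ^ (redE q (b i) - a)
            * ((redE q (b i)).choose a : F)) := by
    intro i
    rw [Polynomial.coeff_sub, ← pow_redE (f'.coeff (i:ℕ) - f.coeff (i:ℕ)) (b i), ← hqdef]
    exact sub_pow _ _ _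
  calc cf F P n m' b * ∏ i : Fin n, ((f' - f).coeff (i:ℕ)) ^ (b i)
      = cf F P n m' b * ∏ i : Fin n, ∑ a ∈ Finset.range (redE q (b i) + 1),
          ((-1:F) ^ (a + redE q (b i)) * (f'.coeff (i:ℕ)) ^ a
            * (f.coeff (i:ℕ)) ^ (redE q (b i) - a)
            * ((redE q (b i)).choose a : F)) := by
        rw [Finset.prod_congr rfl fun i _ => hstep i]
    _ = cf F P n m' b * ∑ aa ∈ Fintype.piFinset (fun i => Finset.range (redE q (b i) + 1)),
          ∏ i : Fin n, ((-1:F) ^ (aa i + redE q (b i)) * (f'.coeff (i:ℕ)) ^ (aa i)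
            * (f.coeff (i:ℕ)) ^ (redE q (b i) - aa i)
            * ((redE q (b i)).choose (aa i) : F)) := by
        rw [Finset.prod_univ_sum]
    _ = ∑ aa ∈ Fintype.piFinset (fun i => Finset.range (redE q (b i) + 1)),
          termF F P n m' ⟨b, aa⟩ f f' := by
        rw [Finset.mul_sum]
        rfl

lemma matrix_rank_add_le {k : Type} [Fintype k] {K : Type} [Field K] (A B : Matrix k k K) :
    (A + B).rank ≤ A.rank + B.rank := by
  have hr : LinearMap.range ((A+B).mulVecLin) ≤
      LinearMap.range A.mulVecLin ⊔ LinearMap.range B.mulVecLin := by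
    rw [Matrix.mulVecLin_add]
    rintro x ⟨y, rfl⟩
    rw [LinearMap.add_apply]
    exact Submodule.add_mem_sup (LinearMap.mem_range_self _ y) (LinearMap.mem_range_self _ y)
  refine le_trans (Submodule.finrank_mono hr) ?_
  exact Submodule.finrank_add_le_finrank_add_finrank _ _

theorem card_le (P : F[X]) (hd : 1 ≤ P.natDegree) (h0 : P.coeff 0 = 0)
    (n : ℕ) (hn : 1 ≤ n) (A : Finset F[X])
    (hA : ∀ f ∈ A, f.degree < (n : WithBot ℕ))
    (hav : ¬ ∃ f g : F[X], f ∈ A ∧ P.comp g ≠ 0 ∧ f + P.comp g ∈ A) :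
    A.card ≤ 2 * (SSet (Fintype.card F) P.natDegree n).card := by
  classical
  have hq2 : 2 ≤ Fintype.card F := Fintype.one_lt_card
  set m' := (n - 1) / P.natDegree with hm'
  have hm : P.natDegree * m' < n := by
    have h1 : (n-1) / P.natDegree * P.natDegree ≤ n - 1 := Nat.div_mul_le_self _ _
    have h2 : P.natDegree * m' = m' * P.natDegree := Nat.mul_comm _ _
    rw [hm'] at h2 ⊢
    omega
  set Dm := ((Fintype.card F - 1) * (P.natDegree * n - m')) / P.natDegree with hDm
  have hDD : DDelta (Fintype.card F) P.natDegree n = Dm / 2 := by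
    rw [DDelta, ← hm', ← hDm]
  -- diagonal and off-diagonal values
  have hdiag : ∀ f : F[X], Mfun F P n m' (f - f) = 1 := by
    intro f
    rw [sub_self]
    rw [Mfun_count P n m' hm 0 (by rw [Polynomial.degree_zero]; exact WithBot.bot_lt_coe n)]
    have hiff : ∀ v : Fin m' → F,
        (if P.comp (Gv F m' v) = 0 then (1:F) else 0) = (if v = 0 then (1:F) else 0) := by
      intro v
      by_cases h : v = 0
      · rw [if_pos ((comp_Gv_eq_zero_iff P hd h0 v).mpr h), if_pos h]
      · rw [if_neg (fun hc => h ((comp_Gv_eq_zero_iff P hd h0 v).mp hc)), if_neg h]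
    rw [Finset.sum_congr rfl fun v _ => hiff v]
    rw [Finset.sum_ite_eq' Finset.univ (0 : Fin m' → F) (fun _ => (1:F))]
    rw [if_pos (Finset.mem_univ _)]
  have hoff : ∀ f f' : F[X], f ∈ A → f' ∈ A → f ≠ f' → Mfun F P n m' (f' - f) = 0 := by
    intro f f' hf hf' hne
    rw [Mfun_count P n m' hm (f' - f)
      (lt_of_le_of_lt (Polynomial.degree_sub_le _ _) (max_lt (hA f' hf') (hA f hf)))]
    refine Finset.sum_eq_zero fun v _ => ?_
    rw [if_neg]
    intro hc
    refine hav ⟨f, Gv F m' v, hf, ?_, ?_⟩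
    · rw [hc]
      exact sub_ne_zero_of_ne (Ne.symm hne)
    · rw [hc, show f + (f' - f) = f' from by ring]
      exact hf'
  -- index sets
  set idxL := (idxSet F P n m').filter
    (fun p => ∑ i, p.2 i ≤ DDelta (Fintype.card F) P.natDegree n) with hidxL
  set idxR := (idxSet F P n m').filter
    (fun p => ¬ (∑ i, p.2 i ≤ DDelta (Fintype.card F) P.natDegree n)) with hidxR
  have hidx : ∀ p ∈ idxSet F P n m', (∀ i, p.2 i ≤ redE (Fintype.card F) (p.1 i)) ∧
      (∑ i, redE (Fintype.card F) (p.1 i) ≤ Dm) := by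
    intro p hp
    rw [idxSet, Finset.mem_sigma] at hp
    obtain ⟨hp1, hp2⟩ := hp
    rw [Finset.mem_filter] at hp1
    constructor
    · intro i
      have hmem := Fintype.mem_piFinset.mp hp2 i
      rw [Finset.mem_range] at hmem
      omega
    · have hkd := key_deg P hd n m' p.1 hp1.1 hp1.2
      rw [← hDm] at hkd
      have hred : ∑ i, redE (Fintype.card F) (p.1 i) ≤ ∑ i, p.1 i :=
        Finset.sum_le_sum fun i _ => redE_le _ _
      omega
  have hmemL : ∀ p ∈ idxL, p.2 ∈ SSet (Fintype.card F) P.natDegree n := by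
    intro p hp
    rw [hidxL, Finset.mem_filter] at hp
    obtain ⟨hpi, hps⟩ := hp
    obtain ⟨hple, _⟩ := hidx p hpi
    rw [SSet, Finset.mem_filter]
    constructor
    · rw [Fintype.mem_piFinset]
      intro i
      rw [Finset.mem_range]
      have := hple i
      have := redE_le_q (Fintype.card F) (p.1 i) hq2
      omega
    · exact hps
  have hmemR : ∀ p ∈ idxR, (fun i => redE (Fintype.card F) (p.1 i) - p.2 i)
      ∈ SSet (Fintype.card F) P.natDegree n := by
    intro p hp
    rw [hidxR, Finset.mem_filter] at hp
    obtain ⟨hpi, hps⟩ := hp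
    obtain ⟨hple, hpsum⟩ := hidx p hpi
    rw [SSet, Finset.mem_filter]
    constructor
    · rw [Fintype.mem_piFinset]
      intro i
      rw [Finset.mem_range]
      have := redE_le_q (Fintype.card F) (p.1 i) hq2
      omega
    · rw [hDD] at hps ⊢
      have hsplit : (∑ i, (redE (Fintype.card F) (p.1 i) - p.2 i)) + ∑ i, p.2 i
          = ∑ i, redE (Fintype.card F) (p.1 i) := by
        rw [← Finset.sum_add_distrib]
        refine Finset.sum_congr rfl fun i _ => ?_
        have := hple i
        omega
      have hbeta : (∑ i, (fun i => redE (Fintype.card F) (p.1 i) - p.2 i) i)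
          = ∑ i, (redE (Fintype.card F) (p.1 i) - p.2 i) := rfl
      omega
  -- the three scalar kernels
  set mon : F[X] → (Fin n → ℕ) → F := fun u e => ∏ i : Fin n, (u.coeff (i:ℕ)) ^ (e i) with hmon
  set ulf : F[X] → (Fin n → ℕ) → F := fun u a =>
    ∑ p ∈ idxL.filter (fun p => p.2 = a), cf F P n m' p.1 * ∏ i : Fin n,
      ((-1:F) ^ (p.2 i + redE (Fintype.card F) (p.1 i))
        * (u.coeff (i:ℕ)) ^ (redE (Fintype.card F) (p.1 i) - p.2 i)
        * ((redE (Fintype.card F) (p.1 i)).choose (p.2 i) : F)) with hulf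
  set vrf : (Fin n → ℕ) → F[X] → F := fun e u =>
    ∑ p ∈ idxR.filter (fun p => (fun i => redE (Fintype.card F) (p.1 i) - p.2 i) = e),
      cf F P n m' p.1 * ∏ i : Fin n,
      ((-1:F) ^ (p.2 i + redE (Fintype.card F) (p.1 i))
        * (u.coeff (i:ℕ)) ^ (p.2 i)
        * ((redE (Fintype.card F) (p.1 i)).choose (p.2 i) : F)) with hvrf
  have ha : ∀ f f' : F[X], ∑ p ∈ idxL, termF F P n m' p f f'
      = ∑ a ∈ SSet (Fintype.card F) P.natDegree n, ulf f a * mon f' a := by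
    intro f f'
    rw [← Finset.sum_fiberwise_of_maps_to hmemL (fun p => termF F P n m' p f f')]
    refine Finset.sum_congr rfl fun a _ => ?_
    rw [hulf, Finset.sum_mul]
    refine Finset.sum_congr rfl fun p hp => ?_
    obtain ⟨_, hpk⟩ := Finset.mem_filter.mp hp
    rw [← hpk]
    rw [termF, hmon]
    conv_rhs => rw [mul_assoc, ← Finset.prod_mul_distrib]
    congr 1
    refine Finset.prod_congr rfl fun i _ => ?_
    ring
  have hb : ∀ f f' : F[X], ∑ p ∈ idxR, termF F P n m' p f f'
      = ∑ e ∈ SSet (Fintype.card F) P.natDegree n, mon f e * vrf e f' := by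
    intro f f'
    rw [← Finset.sum_fiberwise_of_maps_to hmemR (fun p => termF F P n m' p f f')]
    refine Finset.sum_congr rfl fun e _ => ?_
    rw [hvrf, Finset.mul_sum]
    refine Finset.sum_congr rfl fun p hp => ?_
    obtain ⟨_, hpk⟩ := Finset.mem_filter.mp hp
    rw [← hpk]
    rw [termF, hmon]
    conv_rhs => rw [mul_left_comm, ← Finset.prod_mul_distrib]
    congr 1
    refine Finset.prod_congr rfl fun i _ => ?_
    ring
  -- matrices
  set SF := SSet (Fintype.card F) P.natDegree n with hSF
  set MA : Matrix ↥A ↥A F := fun f f' => Mfun F P n m' ((f' : F[X]) - (f : F[X])) with hMAdef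
  have hMA : MA = (1 : Matrix ↥A ↥A F) := by
    ext f f'
    by_cases h : f = f'
    · subst h
      rw [Matrix.one_apply_eq]
      exact hdiag ↑f
    · rw [Matrix.one_apply_ne h]
      exact hoff ↑f ↑f' f.2 f'.2 (fun hc => h (Subtype.ext hc))
  set UL : Matrix ↥A ↥SF F := fun f a => ulf ↑f ↑a with hUL
  set NR : Matrix ↥SF ↥A F := fun a f' => mon ↑f' ↑a with hNR
  set NL : Matrix ↥A ↥SF F := fun f e => mon ↑f ↑e with hNL
  set VR : Matrix ↥SF ↥A F := fun e f' => vrf ↑e ↑f' with hVR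
  have hdecomp : MA = UL * NR + NL * VR := by
    ext f f'
    rw [Matrix.add_apply, Matrix.mul_apply, Matrix.mul_apply]
    have h1 : MA f f' = (∑ p ∈ idxL, termF F P n m' p ↑f ↑f')
        + ∑ p ∈ idxR, termF F P n m' p ↑f ↑f' := by
      show Mfun F P n m' ((f' : F[X]) - ↑f) = _
      rw [Mfun_term_expand, hidxL, hidxR]
      exact (Finset.sum_filter_add_sum_filter_not _ _ _).symm
    rw [h1, ha ↑f ↑f', hb ↑f ↑f']
    congr 1
    · exact (Finset.sum_coe_sort SF (fun a => ulf ↑f a * mon ↑f' a)).symm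
    · exact (Finset.sum_coe_sort SF (fun e => mon ↑f e * vrf e ↑f')).symm
  have hrank1 : (UL * NR).rank ≤ SF.card := by
    refine le_trans (Matrix.rank_mul_le_left _ _) ?_
    refine le_trans (Matrix.rank_le_card_width _) ?_
    rw [Fintype.card_coe]
  have hrank2 : (NL * VR).rank ≤ SF.card := by
    refine le_trans (Matrix.rank_mul_le_left _ _) ?_
    refine le_trans (Matrix.rank_le_card_width _) ?_
    rw [Fintype.card_coe]
  calc A.card = Fintype.card ↥A := (Fintype.card_coe A).symm
    _ = (1 : Matrix ↥A ↥A F).rank := Matrix.rank_one.symm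
    _ = (UL * NR + NL * VR).rank := by rw [← hMA, hdecomp]
    _ ≤ (UL * NR).rank + (NL * VR).rank := matrix_rank_add_le _ _
    _ ≤ SF.card + SF.card := add_le_add hrank1 hrank2
    _ = 2 * SF.card := by ring

lemma SSet_card_bound (q d n : ℕ) (x : ℝ) (hx0 : 0 < x) (hx1 : x ≤ 1) :
    ((SSet q d n).card : ℝ) * x ^ (DDelta q d n)
      ≤ (∑ e ∈ Finset.range q, x ^ e) ^ n := by
  classical
  calc ((SSet q d n).card : ℝ) * x ^ (DDelta q d n)
      = ∑ _b ∈ SSet q d n, x ^ (DDelta q d n) := by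
        rw [Finset.sum_const, nsmul_eq_mul]
    _ ≤ ∑ b ∈ SSet q d n, x ^ (∑ i, b i) := by
        refine Finset.sum_le_sum fun b hb => ?_
        have hble : ∑ i, b i ≤ DDelta q d n := (Finset.mem_filter.mp hb).2
        exact pow_le_pow_of_le_one hx0.le hx1 hble
    _ ≤ ∑ b ∈ Fintype.piFinset (fun _ : Fin n => Finset.range q), x ^ (∑ i, b i) := by
        refine Finset.sum_le_sum_of_subset_of_nonneg (Finset.filter_subset _ _)
          (fun b _ _ => pow_nonneg hx0.le _)
    _ = ∑ b ∈ Fintype.piFinset (fun _ : Fin n => Finset.range q), ∏ i : Fin n, x ^ (b i) := by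
        refine Finset.sum_congr rfl fun b _ => ?_
        rw [← Finset.prod_pow_eq_pow_sum]
    _ = ∏ _i : Fin n, ∑ e ∈ Finset.range q, x ^ e := (Finset.prod_univ_sum _ _).symm
    _ = (∑ e ∈ Finset.range q, x ^ e) ^ n := by
        rw [Finset.prod_const, Finset.card_univ, Fintype.card_fin]

lemma DDelta_real_bound (q d n : ℕ) (hd : 1 ≤ d) (hn : 1 ≤ n) (hq : 2 ≤ q) :
    (DDelta q d n : ℝ) ≤ (((q:ℝ)-1)/2 - ((q:ℝ)-1)/(2*(d:ℝ)^2)) * n + q := by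
  have hdR : (1:ℝ) ≤ (d:ℝ) := by exact_mod_cast hd
  have hdpos : (0:ℝ) < (d:ℝ) := by linarith
  have hqR : (2:ℝ) ≤ (q:ℝ) := by exact_mod_cast hq
  set m' := (n - 1) / d with hm'
  set X := (q-1) * (d*n - m') with hX
  have hDD : DDelta q d n = X / d / 2 := rfl
  have hnat : DDelta q d n * (2 * d) ≤ X := by
    have a1 : X/d/2*2 ≤ X/d := Nat.div_mul_le_self _ 2
    have a2 : X/d*d ≤ X := Nat.div_mul_le_self _ d
    calc DDelta q d n * (2*d) = (X/d/2*2)*d := by rw [hDD]; ring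
      _ ≤ (X/d)*d := Nat.mul_le_mul_right _ a1
      _ ≤ X := a2
  have h0 : (DDelta q d n : ℝ) ≤ (X:ℝ) / (2*d) := by
    rw [le_div_iff₀ (by linarith : (0:ℝ) < 2*(d:ℝ))]
    exact_mod_cast hnat
  have hm'led : m' ≤ d * n := by
    have h1 : m' ≤ n - 1 := hm' ▸ Nat.div_le_self _ _
    have h2 : n ≤ d * n := Nat.le_mul_of_pos_left n (by omega)
    omega
  have hX1 : (X:ℝ) = ((q:ℝ)-1) * ((d:ℝ)*(n:ℝ) - (m':ℝ)) := by
    rw [hX]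
    push_cast [Nat.cast_sub hm'led, Nat.cast_sub (show 1 ≤ q by omega)]
    ring
  have hm'ge : (n:ℝ)/(d:ℝ) - 1 ≤ (m':ℝ) := by
    have hdm : n ≤ d * m' + d := by
      have hmod := Nat.div_add_mod (n-1) d
      rw [← hm'] at hmod
      have hlt : (n-1) % d < d := Nat.mod_lt _ (by omega)
      omega
    have hdm' : (n:ℝ) ≤ (d:ℝ) * (m':ℝ) + d := by exact_mod_cast hdm
    rw [sub_le_iff_le_add, div_le_iff₀ hdpos]
    nlinarith
  calc (DDelta q d n : ℝ) ≤ (X:ℝ)/(2*(d:ℝ)) := h0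
    _ = ((q:ℝ)-1) * ((d:ℝ)*n - (m':ℝ)) / (2*(d:ℝ)) := by rw [hX1]
    _ ≤ ((q:ℝ)-1) * ((d:ℝ)*n - ((n:ℝ)/(d:ℝ) - 1)) / (2*(d:ℝ)) := by
        have hnum : ((q:ℝ)-1) * ((d:ℝ)*n - (m':ℝ)) ≤ ((q:ℝ)-1) * ((d:ℝ)*n - ((n:ℝ)/(d:ℝ) - 1)) := by
          refine mul_le_mul_of_nonneg_left (by linarith) (by linarith)
        gcongr
    _ = (((q:ℝ)-1)/2 - ((q:ℝ)-1)/(2*(d:ℝ)^2)) * n + ((q:ℝ)-1)/(2*(d:ℝ)) := by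
        field_simp
        ring
    _ ≤ (((q:ℝ)-1)/2 - ((q:ℝ)-1)/(2*(d:ℝ)^2)) * n + q := by
        have hlast : ((q:ℝ)-1)/(2*(d:ℝ)) ≤ q := by
          rw [div_le_iff₀ (by linarith)]
          nlinarith
        linarith

lemma exists_good_x (q : ℕ) (hq : 2 ≤ q) (β : ℝ) (hβ0 : 0 ≤ β) (hβ : β < ((q:ℝ)-1)/2) :
    ∃ x : ℝ, 0 < x ∧ x < 1 ∧ (∑ e ∈ Finset.range q, x ^ e) < (q:ℝ) * x ^ β := by
  have hqR : (2:ℝ) ≤ (q:ℝ) := by exact_mod_cast hq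
  set ψ : ℝ → ℝ := fun x => (q:ℝ) * x ^ β - ∑ e ∈ Finset.range q, x ^ e with hψ
  have hψ1 : ψ 1 = 0 := by
    rw [hψ]
    simp [Real.one_rpow]
  set D : ℝ := (q:ℝ) * β - ∑ e ∈ Finset.range q, (e:ℝ) with hD
  have hDneg : D < 0 := by
    have hgauss : (∑ e ∈ Finset.range q, (e:ℝ)) = (q:ℝ) * ((q:ℝ)-1) / 2 := by
      have h := Finset.sum_range_id_mul_two q
      have h2 : ((∑ i ∈ Finset.range q, i : ℕ) : ℝ) * 2 = ((q * (q-1) : ℕ) : ℝ) := by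
        exact_mod_cast congrArg (Nat.cast : ℕ → ℝ) h
      push_cast [Nat.cast_sub (show 1 ≤ q by omega)] at h2
      linarith
    rw [hD, hgauss]
    have : (q:ℝ) * β < (q:ℝ) * (((q:ℝ)-1)/2) := by
      refine mul_lt_mul_of_pos_left hβ (by linarith)
    linarith [this]
  have hder : HasDerivAt ψ D 1 := by
    have h1 : HasDerivAt (fun x : ℝ => x ^ β) (β * (1:ℝ) ^ (β - 1)) 1 :=
      Real.hasDerivAt_rpow_const (Or.inl one_ne_zero)
    have h1' : HasDerivAt (fun x : ℝ => (q:ℝ) * x ^ β) ((q:ℝ) * β) 1 := by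
      have := h1.const_mul (q:ℝ)
      simpa [Real.one_rpow] using this
    have h2 : HasDerivAt (fun x : ℝ => ∑ e ∈ Finset.range q, x ^ e)
        (∑ e ∈ Finset.range q, (e:ℝ) * (1:ℝ) ^ (e - 1)) 1 :=
      HasDerivAt.fun_sum (u := Finset.range q) (fun e _ => hasDerivAt_pow e (1:ℝ))
    have h2' : HasDerivAt (fun x : ℝ => ∑ e ∈ Finset.range q, x ^ e)
        (∑ e ∈ Finset.range q, (e:ℝ)) 1 := by
      simpa using h2
    exact h1'.sub h2'
  have hslope : Filter.Tendsto (slope ψ 1) (nhdsWithin 1 (Set.Iio 1)) (nhds D) := by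
    refine (hasDerivAt_iff_tendsto_slope.mp hder).mono_left (nhdsWithin_mono _ ?_)
    intro y hy
    exact ne_of_lt hy
  have hev1 : ∀ᶠ y in nhdsWithin 1 (Set.Iio 1), slope ψ 1 y < 0 :=
    hslope.eventually_lt_const hDneg
  have hev2 : ∀ᶠ y in nhdsWithin 1 (Set.Iio 1), y ∈ Set.Ioo (0:ℝ) 1 :=
    Filter.eventually_of_mem (Ioo_mem_nhdsLT_of_mem ⟨zero_lt_one, le_refl 1⟩) (fun y hy => hy)
  obtain ⟨y, hy1, hy2⟩ := (hev1.and hev2).exists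
  refine ⟨y, hy2.1, hy2.2, ?_⟩
  have hyne : y - 1 ≠ 0 := sub_ne_zero.mpr (ne_of_lt hy2.2)
  have hval : ψ y = slope ψ 1 y * (y - 1) := by
    rw [slope_def_field, hψ1]
    field_simp
    rw [sub_zero]
  have hpos : 0 < ψ y := by
    rw [hval]
    have h1 : slope ψ 1 y < 0 := hy1
    have h2 : y - 1 < 0 := by linarith [hy2.2]
    exact mul_pos_of_neg_of_neg h1 h2
  rw [hψ] at hpos
  simp only at hpos
  linarith

end LiSauer

/-- **Li–Sauermann theorem** (power-saving Sárközy theorem in function fields).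
Fix a prime power `q` and a degree `d ≥ 1`. There exist constants `γ ∈ (0,1)` and
`C > 0`, depending only on `q` and `d`, such that for every finite field `F` with `q`
elements, every polynomial `P ∈ F[X]` of degree `d` with zero constant term, and every
`n ≥ 1`: if `A ⊆ {f ∈ F[t] : deg f < n}` contains no pair `f, f + P(g)` with
`P(g) ≠ 0`, then `|A| ≤ C · (qⁿ)^{1−γ}`. -/
theorem li_sauermann (q d : ℕ) (hq : IsPrimePow q) (hd : 1 ≤ d) :
    ∃ γ C : ℝ, 0 < γ ∧ γ < 1 ∧ 0 < C ∧
      ∀ (F : Type) [Field F] [Fintype F], Fintype.card F = q →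
        ∀ P : Polynomial F, P.natDegree = d → P.coeff 0 = 0 →
          ∀ n : ℕ, 1 ≤ n → ∀ A : Finset (Polynomial F),
            (∀ f ∈ A, f.degree < (n : WithBot ℕ)) →
            (¬ ∃ f g : Polynomial F, f ∈ A ∧ P.comp g ≠ 0 ∧ f + P.comp g ∈ A) →
            (A.card : ℝ) ≤ C * ((q : ℝ) ^ n) ^ (1 - γ) := by
  classical
  have hq2 : 2 ≤ q := hq.two_le
  have hqR : (2:ℝ) ≤ (q:ℝ) := by exact_mod_cast hq2
  have hdR : (1:ℝ) ≤ (d:ℝ) := by exact_mod_cast hd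
  set β : ℝ := ((q:ℝ)-1)/2 - ((q:ℝ)-1)/(2*(d:ℝ)^2) with hβ
  have hβ0 : 0 ≤ β := by
    rw [hβ, sub_nonneg, div_le_div_iff₀ (by positivity) (by norm_num)]
    nlinarith [mul_nonneg (show (0:ℝ) ≤ (q:ℝ)-1 by linarith)
      (show (0:ℝ) ≤ (d:ℝ)^2 - 1 by nlinarith [hdR])]
  have hβlt : β < ((q:ℝ)-1)/2 := by
    rw [hβ]
    have hpos : 0 < ((q:ℝ)-1)/(2*(d:ℝ)^2) := div_pos (by linarith) (by positivity)
    linarith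
  obtain ⟨x, hx0, hx1, hxlt⟩ := LiSauer.exists_good_x q hq2 β hβ0 hβlt
  set s : ℝ := ∑ e ∈ Finset.range q, x ^ e with hs
  have hs1x : 1 + x ≤ s := by
    rw [hs]
    have hsub : ∑ e ∈ Finset.range 2, x ^ e ≤ ∑ e ∈ Finset.range q, x ^ e :=
      Finset.sum_le_sum_of_subset_of_nonneg (Finset.range_subset_range.mpr hq2)
        (fun _ _ _ => pow_nonneg hx0.le _)
    simpa [Finset.sum_range_succ] using hsub
  have hs1 : 1 < s := by linarith
  have hxb_pos : 0 < x ^ β := Real.rpow_pos_of_pos hx0 β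
  set ρ : ℝ := s / x ^ β with hρ
  have hρ1 : 1 < ρ := by
    rw [hρ, lt_div_iff₀ hxb_pos]
    have hle1 : x ^ β ≤ 1 := Real.rpow_le_one hx0.le hx1.le hβ0
    linarith
  have hρq : ρ < q := by
    rw [hρ, div_lt_iff₀ hxb_pos]
    exact hxlt
  have hρ0 : 0 < ρ := lt_trans zero_lt_one hρ1
  have hlogq : 0 < Real.log q := Real.log_pos (by linarith)
  set γ : ℝ := 1 - Real.log ρ / Real.log q with hγ
  have hγ0 : 0 < γ := by
    rw [hγ]
    have h1 : Real.log ρ < Real.log q := Real.log_lt_log hρ0 hρq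
    have h2 : Real.log ρ / Real.log q < 1 := (div_lt_one hlogq).mpr h1
    linarith
  have hγ1 : γ < 1 := by
    rw [hγ]
    have h1 : 0 < Real.log ρ := Real.log_pos hρ1
    have h2 : 0 < Real.log ρ / Real.log q := div_pos h1 hlogq
    linarith
  have hxq_pos : 0 < x ^ (q:ℝ) := Real.rpow_pos_of_pos hx0 _
  set C : ℝ := 2 / x ^ (q:ℝ) with hC
  have hC0 : 0 < C := by rw [hC]; positivity
  refine ⟨γ, C, hγ0, hγ1, hC0, ?_⟩
  intro F _ _ hF P hPdeg hP0 n hn A hA hav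
  have hcards := LiSauer.card_le P (by rw [hPdeg]; exact hd) hP0 n hn A hA hav
  rw [hF, hPdeg] at hcards
  have hcount := LiSauer.SSet_card_bound q d n x hx0 hx1.le
  have hdd := LiSauer.DDelta_real_bound q d n hd hn hq2
  rw [← hβ] at hdd
  -- rewrite the target power
  have hq0 : (0:ℝ) ≤ (q:ℝ) := by linarith
  have h2 : ((q:ℝ)) ^ (1 - γ : ℝ) = ρ := by
    rw [hγ, show (1 : ℝ) - (1 - Real.log ρ / Real.log q) = Real.log ρ / Real.log q from by ring]
    rw [Real.rpow_def_of_pos (by linarith : (0:ℝ) < (q:ℝ)), mul_comm, div_mul_cancel₀ _ (ne_of_gt hlogq)]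
    exact Real.exp_log hρ0
  have hqn : ((q:ℝ) ^ n) ^ (1 - γ : ℝ) = ρ ^ n := by
    rw [← Real.rpow_natCast (q:ℝ) n, ← Real.rpow_mul hq0, mul_comm, Real.rpow_mul hq0, h2,
      Real.rpow_natCast]
  have hsn_pos : (0:ℝ) < s ^ n := pow_pos (by linarith) n
  have hxd_pos : (0:ℝ) < x ^ (LiSauer.DDelta q d n) := pow_pos hx0 _
  have hxbnq_pos : (0:ℝ) < x ^ (β * (n:ℝ) + (q:ℝ)) := Real.rpow_pos_of_pos hx0 _
  have hxbn_pos : (0:ℝ) < x ^ (β * (n:ℝ)) := Real.rpow_pos_of_pos hx0 _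
  calc (A.card : ℝ) ≤ 2 * ((LiSauer.SSet q d n).card : ℝ) := by exact_mod_cast hcards
    _ ≤ 2 * (s ^ n / x ^ (LiSauer.DDelta q d n)) := by
        have hcc : ((LiSauer.SSet q d n).card : ℝ) ≤ s ^ n / x ^ (LiSauer.DDelta q d n) :=
          (le_div_iff₀ hxd_pos).mpr hcount
        linarith
    _ ≤ 2 * (s ^ n / x ^ (β * (n:ℝ) + (q:ℝ))) := by
        have hle : x ^ (β * (n:ℝ) + (q:ℝ)) ≤ x ^ (LiSauer.DDelta q d n) := by
          rw [← Real.rpow_natCast x (LiSauer.DDelta q d n)]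
          refine Real.rpow_le_rpow_of_exponent_ge hx0 hx1.le ?_
          calc ((LiSauer.DDelta q d n : ℕ) : ℝ) ≤ β * n + q := hdd
            _ = β * (n:ℝ) + (q:ℝ) := by ring
        gcongr
    _ = C * ρ ^ n := by
        have hxbn : (x ^ β) ^ n = x ^ (β * (n:ℝ)) := by
          rw [← Real.rpow_natCast (x ^ β) n, ← Real.rpow_mul hx0.le]
        have hadd : x ^ (β * (n:ℝ) + (q:ℝ)) = x ^ (β * (n:ℝ)) * x ^ (q:ℝ) :=
          Real.rpow_add hx0 _ _
        rw [hC, hρ, div_pow, hxbn, hadd]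
        field_simp
    _ = C * ((q:ℝ) ^ n) ^ (1 - γ : ℝ) := by rw [hqn]
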